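/- In a finite tree G, if S ⊆ T are nonempty subsets of X and ℓ ∈ X, then the distance minimizer π(ℓ, T) of ℓ on H(T) lies on the path P(ℓ, π(ℓ, S)) from ℓ to the distance minimizer of ℓ on H(S). -/
import Mathlib


open SimpleGraph

/-- `z` lies on a path from `x` to `y` in `G` (in a tree, the unique path). -/
def pathSet {X : Type*} (G : SimpleGraph X) (x y z : X) : Prop :=
  ∃ p : G.Walk x y, p.IsPath ∧ z ∈ p.support

/-- The path hull `H(S)`: union of paths between pairs of nodes of `S`. -/
def hull {X : Type*} (G : SimpleGraph X) (S : Set X) (z : X) : Prop :=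
  ∃ x ∈ S, ∃ y ∈ S, pathSet G x y z

/-- `m` is a distance minimizer of `x` on the path hull of `S`. -/
def isMinimizer {X : Type*} (G : SimpleGraph X) (x : X) (S : Set X) (m : X) : Prop :=
  hull G S m ∧ ∀ y, hull G S y → G.dist x m ≤ G.dist x y

/-- `ℓ` is a leaf: it has exactly one neighbor. -/
def isLeaf {X : Type*} (G : SimpleGraph X) (ℓ : X) : Prop := ∃! x, G.Adj ℓ x

/-- `t` is the top-ranked alternative of the strict preference `P`. -/
def isTop {X : Type*} (P : X → X → Prop) (t : X) : Prop := ∀ y, y ≠ t → P t y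

/-- `P` with peak `t` is single-peaked on the tree `G`. -/
def singlePeakedAt {X : Type*} (G : SimpleGraph X) (P : X → X → Prop) (t : X) : Prop :=
  ∀ a b, a ≠ b → pathSet G t a b → P b a


section aux

variable {X : Type*} {G : SimpleGraph X}

/-- any vertex of any path between x and y is in pathSet; conversely with unique path. -/
lemma pathSet_iff (hG : G.IsTree) {x y : X} (p : G.Walk x y) (hp : p.IsPath) (w : X) :
    pathSet G x y w ↔ w ∈ p.support := by
  constructor
  · rintro ⟨q, hq, hw⟩
    rwa [(hG.existsUnique_path x y).unique hq hp] at hw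
  · exact fun h => ⟨p, hp, h⟩

lemma pathSet_symm (hG : G.IsTree) {x y w : X} (h : pathSet G x y w) : pathSet G y x w := by
  obtain ⟨p, hp, hw⟩ := h
  exact ⟨p.reverse, hp.reverse, by simpa [SimpleGraph.Walk.support_reverse]⟩

lemma isPath_append {u c m : X} {p : G.Walk u c} {q : G.Walk c m}
    (hp : p.IsPath) (hq : q.IsPath) (hdisj : ∀ v ∈ p.support, v ∈ q.support → v = c) :
    (p.append q).IsPath := by
  rw [Walk.isPath_def, Walk.support_append]
  refine List.Nodup.append hp.support_nodup (hq.support_nodup.tail) ?_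
  intro v hv hv'
  have hvq : v ∈ q.support := List.mem_of_mem_tail hv'
  have : v = c := hdisj v hv hvq
  subst this
  have := hq.support_nodup
  rw [q.support_eq_cons] at this
  exact (List.nodup_cons.mp this).1 hv'

/-- first vertex along a path `r` satisfying `Q`. -/
lemma exists_first_meet (Q : X → Prop) :
    ∀ {u z : X} (r : G.Walk u z), r.IsPath → Q z →
      ∃ (c : X) (r1 : G.Walk u c), Q c ∧ r1.IsPath ∧ r1.support ⊆ r.support ∧
        ∀ v ∈ r1.support, Q v → v = c := by
  intro u z r
  induction r with
  | nil =>
    intro _ hz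
    exact ⟨_, Walk.nil, hz, Walk.IsPath.nil, by simp, by simp⟩
  | @cons a b z h r' ih =>
    intro hr hz
    by_cases hQa : Q a
    · exact ⟨a, Walk.nil, hQa, Walk.IsPath.nil, by simp, by simp⟩
    · obtain ⟨c, r1, hQc, hr1, hsub, hfirst⟩ := ih hr.of_cons hz
      have hans : a ∉ r'.support := ((Walk.cons_isPath_iff h r').mp hr).2
      refine ⟨c, Walk.cons h r1, hQc, ?_, ?_, ?_⟩
      · rw [Walk.cons_isPath_iff]
        exact ⟨hr1, fun hmem => hans (hsub hmem)⟩
      · intro v hv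
        rw [Walk.support_cons, List.mem_cons] at hv ⊢
        rcases hv with hv | hv
        · exact Or.inl hv
        · exact Or.inr (hsub hv)
      · intro v hv hQv
        rw [Walk.support_cons, List.mem_cons] at hv
        rcases hv with rfl | hv
        · exact absurd hQv hQa
        · exact hfirst v hv hQv

lemma pathSet_trans (hG : G.IsTree) {u v z w : X}
    (hzuv : pathSet G u v z) (hw : pathSet G u z w) : pathSet G u v w := by
  classical
  obtain ⟨p, hp, hzp⟩ := hzuv
  rw [pathSet_iff hG _ (hp.takeUntil hzp)] at hw
  exact ⟨p, hp, p.support_takeUntil_subset hzp hw⟩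

/-- Key covering lemma: the path from z to m is covered by path(u,z) ∪ path(u,m),
and the meeting point c lies on all three paths. -/
lemma tree_cover (hG : G.IsTree) (u z m : X) :
    ∃ c : X, pathSet G z m c ∧ pathSet G u z c ∧ pathSet G u m c ∧
      ∀ w, pathSet G z m w → pathSet G u z w ∨ pathSet G u m w := by
  classical
  obtain ⟨p, hp, -⟩ := hG.existsUnique_path z m
  obtain ⟨r, hr, -⟩ := hG.existsUnique_path u z
  obtain ⟨c, r1, hcp, hr1, hsub, hfirst⟩ :=
    exists_first_meet (· ∈ p.support) r hr p.start_mem_support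
  -- hcp : c ∈ p.support
  have hcr : c ∈ r.support := hsub (r1.end_mem_support)
  -- the path from u to m
  have hq : (r1.append (p.dropUntil c hcp)).IsPath := by
    refine isPath_append hr1 (hp.dropUntil hcp) ?_
    intro v hv hv'
    exact hfirst v hv (p.support_dropUntil_subset hcp hv')
  have hcuz : pathSet G u z c := ⟨r, hr, hcr⟩
  have hcum : pathSet G u m c :=
    ⟨_, hq, by rw [Walk.mem_support_append_iff]; exact Or.inl r1.end_mem_support⟩
  have hczm : pathSet G z m c := ⟨p, hp, hcp⟩
  refine ⟨c, hczm, hcuz, hcum, ?_⟩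
  intro w hw
  rw [pathSet_iff hG p hp] at hw
  rw [← p.take_spec hcp, Walk.mem_support_append_iff] at hw
  rcases hw with hw | hw
  · -- w on takeUntil: equals reverse of r.dropUntil c
    left
    have h1 : (p.takeUntil c hcp).IsPath := hp.takeUntil hcp
    have h2 : ((r.dropUntil c hcr).reverse).IsPath := (hr.dropUntil hcr).reverse
    have := (hG.existsUnique_path z c).unique h1 h2
    rw [this, Walk.support_reverse, List.mem_reverse] at hw
    exact ⟨r, hr, r.support_dropUntil_subset hcr hw⟩
  · right
    exact ⟨_, hq, by rw [Walk.mem_support_append_iff]; exact Or.inr hw⟩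

lemma path_length_eq_dist (hG : G.IsTree) {x y : X} (p : G.Walk x y) (hp : p.IsPath) :
    p.length = G.dist x y := by
  classical
  refine le_antisymm ?_ (SimpleGraph.dist_le p)
  obtain ⟨q, hq⟩ := hG.isConnected.exists_walk_length_eq_dist x y
  have : p = q.bypass := (hG.existsUnique_path x y).unique hp q.bypass_isPath
  rw [this, ← hq]
  exact Walk.length_bypass_le q

lemma dist_split (hG : G.IsTree) {x y c : X} (h : pathSet G x y c) :
    G.dist x c + G.dist c y = G.dist x y := by
  classical
  obtain ⟨p, hp, hc⟩ := h
  have h1 := path_length_eq_dist hG _ (hp.takeUntil hc)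
  have h2 := path_length_eq_dist hG _ (hp.dropUntil hc)
  have h3 := path_length_eq_dist hG p hp
  rw [← h1, ← h2, ← h3, ← Walk.length_append, p.take_spec hc]

end aux

theorem minimizer_mono_on_path {X : Type*} [Fintype X]
    (G : SimpleGraph X) (hG : G.IsTree)
    (S T : Set X) (hS : S.Nonempty) (hST : S ⊆ T)
    (ℓ z m : X) (hz : isMinimizer G ℓ S z) (hm : isMinimizer G ℓ T m) :
    pathSet G ℓ z m := by
  obtain ⟨u, hu, v, hv, hzuv⟩ := hz.1
  obtain ⟨a, ha, b, hb, hmab⟩ := hm.1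
  obtain ⟨c, hczm, hcℓz, hcℓm, hcover⟩ := tree_cover hG ℓ z m
  -- c is in the hull of T
  have hchull : hull G T c := by
    obtain ⟨c', -, -, -, hcover'⟩ := tree_cover hG u z m
    rcases hcover' c hczm with hc | hc
    · exact ⟨u, hST hu, v, hST hv, pathSet_trans hG hzuv hc⟩
    · obtain ⟨c3, -, -, -, hcover3⟩ := tree_cover hG a m u
      rcases hcover3 c (pathSet_symm hG hc) with h' | h'
      · exact ⟨a, ha, b, hb, pathSet_trans hG hmab h'⟩
      · exact ⟨a, ha, u, hST hu, h'⟩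
  -- minimality forces c = m
  have hle : G.dist ℓ m ≤ G.dist ℓ c := hm.2 c hchull
  have hsplit := dist_split hG hcℓm
  have hzero : G.dist c m = 0 := by omega
  have hcm : c = m := by
    have := (hG.isConnected (c) m).dist_eq_zero_iff.mp hzero
    exact this
  rw [← hcm]
  exact hcℓz
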